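/- Let b > 0, μ, ν ∈ ℝ, λ ∈ (1,∞), and let φ_μ denote the Gaussian density with mean μ and standard deviation b. Then the Rényi divergence satisfies the exact identity D_λ(φ_μ, φ_ν) = (1/(λ−1)) · log ∫_ℝ φ_μ(t)^λ φ_ν(t)^{1−λ} dt = λ (μ − ν)² / (2 b²). In particular, for the Gaussian mechanism A(x) = S(x) + Y with Y ~ N(0,b²) and |S(x) − S(x')| = 1, the divergence of the two output densities equals λ/(2b²). -/

import Mathlib

open MeasureTheory

/-- The Gaussian density with mean `μ` and standard deviation `b`. -/
noncomputable def gaussPdf (b μ t : ℝ) : ℝ :=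
  (1 / (Real.sqrt (2 * Real.pi) * b)) * Real.exp (-(t - μ) ^ 2 / (2 * b ^ 2))

lemma gaussPdf_eq (b μ : ℝ) (hb : 0 < b) :
    gaussPdf b μ = ProbabilityTheory.gaussianPDFReal μ ⟨b ^ 2, sq_nonneg b⟩ := by
  funext t
  simp only [gaussPdf, ProbabilityTheory.gaussianPDFReal, NNReal.coe_mk,
    Real.sqrt_mul (by positivity : (0:ℝ) ≤ 2 * Real.pi), Real.sqrt_sq hb.le, one_div]
  change _ = (√(2 * Real.pi) * √(b ^ 2))⁻¹ * Real.exp (-(t - μ) ^ 2 / (2 * b ^ 2))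
  rw [Real.sqrt_sq hb.le]

lemma integral_gaussPdf (b μ : ℝ) (hb : 0 < b) : ∫ t, gaussPdf b μ t = 1 := by
  rw [gaussPdf_eq b μ hb]
  exact ProbabilityTheory.integral_gaussianPDFReal_eq_one μ
    (by intro h; have h2 := congrArg NNReal.toReal h; exact (pow_pos hb 2).ne' h2)

theorem renyiDiv_gaussian (b μ ν l : ℝ) (hb : 0 < b) (hl : 1 < l) :
    (1 / (l - 1)) *
        Real.log (∫ t : ℝ, gaussPdf b μ t ^ l * gaussPdf b ν t ^ (1 - l))
      = l * (μ - ν) ^ 2 / (2 * b ^ 2) ∧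
    (|μ - ν| = 1 →
      (1 / (l - 1)) *
          Real.log (∫ t : ℝ, gaussPdf b μ t ^ l * gaussPdf b ν t ^ (1 - l))
        = l / (2 * b ^ 2)) := by
  have hb2 : (0:ℝ) < 2 * b ^ 2 := by positivity
  set K : ℝ := l * (l - 1) * (μ - ν) ^ 2 / (2 * b ^ 2) with hK
  set m : ℝ := l * μ + (1 - l) * ν with hm
  have hC : (0:ℝ) < 1 / (Real.sqrt (2 * Real.pi) * b) := by positivity
  have key : ∀ t : ℝ, gaussPdf b μ t ^ l * gaussPdf b ν t ^ (1 - l)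
      = Real.exp K * gaussPdf b m t := by
    intro t
    have hpμ : 0 < gaussPdf b μ t := by unfold gaussPdf; positivity
    have hpν : 0 < gaussPdf b ν t := by unfold gaussPdf; positivity
    rw [Real.rpow_def_of_pos hpμ, Real.rpow_def_of_pos hpν, ← Real.exp_add]
    unfold gaussPdf
    rw [Real.log_mul hC.ne' (Real.exp_pos _).ne', Real.log_mul hC.ne' (Real.exp_pos _).ne',
      Real.log_exp, Real.log_exp, mul_comm (Real.exp K), mul_assoc, ← Real.exp_add]
    have : (Real.log (1 / (Real.sqrt (2 * Real.pi) * b)) + -(t - μ) ^ 2 / (2 * b ^ 2)) * l +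
        (Real.log (1 / (Real.sqrt (2 * Real.pi) * b)) + -(t - ν) ^ 2 / (2 * b ^ 2)) * (1 - l)
        = Real.log (1 / (Real.sqrt (2 * Real.pi) * b)) +
          (-(t - m) ^ 2 / (2 * b ^ 2) + K) := by
      rw [hK, hm]
      field_simp
      ring
    rw [this, Real.exp_add, Real.exp_log hC]
  have hint : (∫ t : ℝ, gaussPdf b μ t ^ l * gaussPdf b ν t ^ (1 - l)) = Real.exp K := by
    simp_rw [key]
    rw [integral_const_mul, integral_gaussPdf b m hb, mul_one]
  have hmain : (1 / (l - 1)) *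
      Real.log (∫ t : ℝ, gaussPdf b μ t ^ l * gaussPdf b ν t ^ (1 - l))
      = l * (μ - ν) ^ 2 / (2 * b ^ 2) := by
    rw [hint, Real.log_exp, hK]
    have hl1 : l - 1 ≠ 0 := by linarith
    field_simp
  refine ⟨hmain, fun h => ?_⟩
  rw [hmain, ← sq_abs, h]
  norm_num
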